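/- arXiv:2304.14643 — 3 statements merged into one kernel-verified Lean document; each statement's English description precedes it below -/
import Mathlib

section
/- Let c and γ be two disjoint convex subsets of ℝ^d. Define F(c,γ) = {x ∈ ℝ^d : ∃ y ∈ γ such that the closed segment from x to y intersects c}, and symmetrically F(γ,c). Then F(γ,c) ∩ F(c,γ) = ∅. -/
/-- `Fset c γ` is the set `F(c,γ)` of points `x` such that some segment from `x`
to a point of `γ` intersects `c`. -/
def Fset {d : ℕ} (c γ : Set (EuclideanSpace ℝ (Fin d))) : Set (EuclideanSpace ℝ (Fin d)) :=
  {x | ∃ y ∈ γ, (segment ℝ x y ∩ c).Nonempty}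

theorem stmt0 {d : ℕ} (c γ : Set (EuclideanSpace ℝ (Fin d)))
    (hc : Convex ℝ c) (hγ : Convex ℝ γ) (hdisj : c ∩ γ = ∅) :
    Fset γ c ∩ Fset c γ = ∅ := by
  ext x
  simp only [Set.mem_inter_iff, Set.mem_empty_iff_false, iff_false]
  rintro ⟨⟨y, hy, p, hp, hpγ⟩, ⟨y', hy', q, hq, hqc⟩⟩
  -- y ∈ c, p ∈ segment x y ∩ γ; y' ∈ γ, q ∈ segment x y' ∩ c
  obtain ⟨u, s, hu, hs, hus, hpe⟩ := hp
  obtain ⟨v, t, hv, ht, hvt, hqe⟩ := hq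
  have hs1 : s ≤ 1 := by linarith
  have ht1 : t ≤ 1 := by linarith
  have hne : ∀ z, z ∈ c → z ∈ γ → False := by
    intro z h1 h2
    have : z ∈ c ∩ γ := ⟨h1, h2⟩
    rw [hdisj] at this; exact this
  by_cases hst : s * t = 1
  · -- then s = 1 and t = 1, so p = y ∈ c ∩ γ
    have hseq : s = 1 := by nlinarith
    have hueq : u = 0 := by linarith
    have : p = y := by rw [← hpe, hueq, hseq]; simp
    exact hne y hy (this ▸ hpγ)
  · have hD : 0 < 1 - s * t := by
      rcases lt_or_eq_of_le (mul_le_one₀ hs1 ht ht1) with h | h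
      · linarith
      · exact absurd h hst
    set D := 1 - s * t with hDdef
    set a := t * u / D with ha
    set b := s * v / D with hb
    have ha0 : 0 ≤ a := by positivity
    have hb0 : 0 ≤ b := by positivity
    have hu' : u = 1 - s := by linarith
    have hv' : v = 1 - t := by linarith
    have ha1 : a ≤ 1 := by
      rw [ha, div_le_one hD, hu']
      nlinarith
    have hb1 : b ≤ 1 := by
      rw [hb, div_le_one hD, hv']
      nlinarith
    -- z := (1-a)•p + a•y' ∈ γ, and equals (1-b)•q + b•y ∈ c
    have hzγ : (1 - a) • p + a • y' ∈ γ :=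
      hγ hpγ hy' (by linarith) ha0 (by ring)
    have hzc : (1 - b) • q + b • y ∈ c :=
      hc hqc hy (by linarith) hb0 (by ring)
    have heq : (1 - a) • p + a • y' = (1 - b) • q + b • y := by
      rw [← hpe, ← hqe, ha, hb, hDdef, hu', hv']
      have hD' : (1 : ℝ) - s * t ≠ 0 := ne_of_gt hD
      have hD'' : (1 : ℝ) - t * s ≠ 0 := by rw [mul_comm]; exact hD'
      match_scalars <;> field_simp <;> ring
    exact hne _ hzc (heq ▸ hzγ)
end

section
/- Let x, y, z ∈ ℝ^d and let c, γ ⊆ ℝ^d be convex sets. If there exist y' ∈ [x,y] ∩ c and z' ∈ [x,z] ∩ γ, with y ∈ γ and z ∈ c, then the segments [y,z'] and [y',z] intersect, and consequently c ∩ γ ≠ ∅. -/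
theorem stmt1 {d : ℕ} (c γ : Set (EuclideanSpace ℝ (Fin d)))
    (hc : Convex ℝ c) (hγ : Convex ℝ γ)
    (x y z y' z' : EuclideanSpace ℝ (Fin d))
    (hy : y ∈ γ) (hz : z ∈ c)
    (hy' : y' ∈ segment ℝ x y ∩ c) (hz' : z' ∈ segment ℝ x z ∩ γ) :
    (segment ℝ y z' ∩ segment ℝ y' z).Nonempty ∧ (c ∩ γ).Nonempty := by
  obtain ⟨⟨u, a, hu, ha, hua, hy'eq⟩, hy'c⟩ := hy'
  obtain ⟨⟨v, b, hv, hb, hvb, hz'eq⟩, hz'γ⟩ := hz'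
  have hu' : u = 1 - a := by linarith
  have hv' : v = 1 - b := by linarith
  subst hu' hv'
  have ha1 : a ≤ 1 := by linarith
  have hb1 : b ≤ 1 := by linarith
  by_cases hab : a * b = 1
  · -- then a = 1 and b = 1, so y' = y, z' = z
    have ha' : a = 1 := by nlinarith
    have hb' : b = 1 := by nlinarith
    have hyy : y' = y := by
      rw [← hy'eq]; subst ha'; simp
    have hzz : z' = z := by
      rw [← hz'eq]; subst hb'; simp
    refine ⟨⟨y, left_mem_segment ℝ y z', ?_⟩, ⟨y, ?_, hy⟩⟩
    · rw [hyy]; exact left_mem_segment ℝ y z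
    · rw [← hyy]; exact hy'c
  · have hD : 0 < 1 - a * b := by
      rcases lt_or_eq_of_le (mul_le_one₀ ha1 hb hb1) with h | h
      · linarith
      · exact absurd h hab
    set t : ℝ := (1 - a) / (1 - a * b) with ht
    set s : ℝ := b * (1 - a) / (1 - a * b) with hs
    have ht0 : 0 ≤ t := div_nonneg (by linarith) hD.le
    have ht1 : t ≤ 1 := by
      rw [div_le_one hD]; nlinarith
    have hs0 : 0 ≤ s := div_nonneg (mul_nonneg hb (by linarith)) hD.le
    have hs1 : s ≤ 1 := by
      rw [div_le_one hD]; nlinarith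
    set p := (1 - t) • y + t • z' with hp
    have hp1 : p ∈ segment ℝ y z' :=
      ⟨1 - t, t, by linarith, ht0, by ring, rfl⟩
    have hp2 : p ∈ segment ℝ y' z := by
      refine ⟨1 - s, s, by linarith, hs0, by ring, ?_⟩
      rw [← hy'eq, hp, ← hz'eq]
      have hne : 1 - b * a ≠ 0 := by rw [mul_comm]; exact hD.ne'
      match_scalars <;> (rw [ht, hs]; field_simp <;> ring)
    exact ⟨⟨p, hp1, hp2⟩,
      ⟨p, hc.segment_subset hy'c hz hp2, hγ.segment_subset hy hz'γ hp1⟩⟩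
end

section
/- Let s = [x, y] be a segment in ℝ^d and let c₁, c₂ be two sets such that s ∩ (c₁ ⊕ B̄(0,r)) and s ∩ (c₂ ⊕ B̄(0,r)) are both nonempty for every choice of y in a convex set γ and every choice of x in a convex set Ξ (with the sets c₁ ⊕ B̄(0,r) and c₂ ⊕ B̄(0,r) disjoint). Then the order along [x,y] in which the two inflated sets are first encountered (walking from x to y) is the same for all x ∈ Ξ and y ∈ γ. -/
open Pointwise

/-- The parameter along the oriented segment from `p` to `q` at which the set `C`
is first encountered. -/
noncomputable def firstHit {d : ℕ} (p q : EuclideanSpace ℝ (Fin d))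
    (C : Set (EuclideanSpace ℝ (Fin d))) : ℝ :=
  sInf {t ∈ Set.Icc (0 : ℝ) 1 | (1 - t) • p + t • q ∈ C}

section Aux

variable {d : ℕ}

local notation "E" => EuclideanSpace ℝ (Fin d)

/-- The set of hitting parameters. -/
def hitSet (p q : E) (C : Set E) : Set ℝ :=
  {t ∈ Set.Icc (0 : ℝ) 1 | (1 - t) • p + t • q ∈ C}

lemma firstHit_eq (p q : E) (C : Set E) : firstHit p q C = sInf (hitSet p q C) := rfl

lemma hitSet_eq (p q : E) (C : Set E) :
    hitSet p q C = Set.Icc (0:ℝ) 1 ∩ (AffineMap.lineMap p q : ℝ →ᵃ[ℝ] E) ⁻¹' C := by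
  ext t
  simp only [hitSet, Set.mem_setOf_eq, Set.mem_inter_iff, Set.mem_preimage,
    AffineMap.lineMap_apply_module]

lemma hitSet_isCompact {p q : E} {C : Set E} (hC : IsClosed C) :
    IsCompact (hitSet p q C) := by
  apply isCompact_Icc.of_isClosed_subset
  · rw [hitSet_eq]
    exact isClosed_Icc.inter (hC.preimage AffineMap.lineMap_continuous)
  · rw [hitSet_eq]; exact Set.inter_subset_left

lemma hitSet_convex {p q : E} {C : Set E} (hC : Convex ℝ C) :
    Convex ℝ (hitSet p q C) := by
  rw [hitSet_eq]
  exact (convex_Icc _ _).inter (hC.affine_preimage _)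

lemma hitSet_nonempty {p q : E} {C : Set E} (h : (segment ℝ p q ∩ C).Nonempty) :
    (hitSet p q C).Nonempty := by
  obtain ⟨z, hz, hzC⟩ := h
  rw [segment_eq_image] at hz
  obtain ⟨t, ht, rfl⟩ := hz
  exact ⟨t, ht, hzC⟩

lemma firstHit_mem {p q : E} {C : Set E} (hC : IsClosed C)
    (h : (hitSet p q C).Nonempty) : firstHit p q C ∈ hitSet p q C :=
  (hitSet_isCompact hC).sInf_mem h

/-- Key order lemma: if some hit of `C` occurs no later than some hit of `D`, then the
first hit of `C` is strictly before the first hit of `D`. -/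
lemma firstHit_lt {p q : E} {C D : Set E} (hCc : IsClosed C) (hDc : IsClosed D)
    (hD : Convex ℝ D) (hdisj : Disjoint C D)
    (hCne : (hitSet p q C).Nonempty) (hDne : (hitSet p q D).Nonempty)
    {s t : ℝ} (hs : s ∈ hitSet p q C) (ht : t ∈ hitSet p q D) (hst : s ≤ t) :
    firstHit p q C < firstHit p q D := by
  by_contra hcon
  push_neg at hcon
  have ha := firstHit_mem hCc hCne
  have hb := firstHit_mem hDc hDne
  -- firstHit p q C ∈ hitSet D : it lies between firstHit D and t
  have h1 : firstHit p q C ≤ s := csInf_le ⟨0, fun u hu => hu.1.1⟩ hs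
  have hmem : firstHit p q C ∈ hitSet p q D := by
    have hoc := (hitSet_convex (p := p) (q := q) hD).ordConnected
    exact hoc.out hb ht ⟨hcon, h1.trans hst⟩
  exact (hdisj.ne_of_mem ha.2 hmem.2) rfl

/-- The closed "order certificate" set. -/
def certSet (C D : Set E) : Set (E × E) :=
  Prod.fst '' {p : (E × E) × (Set.Icc (0:ℝ) 1 × Set.Icc (0:ℝ) 1) |
    (1 - (p.2.1 : ℝ)) • p.1.1 + (p.2.1 : ℝ) • p.1.2 ∈ C ∧
    (1 - (p.2.2 : ℝ)) • p.1.1 + (p.2.2 : ℝ) • p.1.2 ∈ D ∧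
      (p.2.1 : ℝ) ≤ (p.2.2 : ℝ)}

lemma certSet_isClosed {C D : Set E} (hC : IsClosed C) (hD : IsClosed D) :
    IsClosed (certSet C D) := by
  apply isClosedMap_fst_of_compactSpace
  have hc1 : Continuous fun p : (E × E) × (Set.Icc (0:ℝ) 1 × Set.Icc (0:ℝ) 1) =>
      (1 - (p.2.1 : ℝ)) • p.1.1 + (p.2.1 : ℝ) • p.1.2 := by fun_prop
  have hc2 : Continuous fun p : (E × E) × (Set.Icc (0:ℝ) 1 × Set.Icc (0:ℝ) 1) =>
      (1 - (p.2.2 : ℝ)) • p.1.1 + (p.2.2 : ℝ) • p.1.2 := by fun_prop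
  simp only [Set.setOf_and]
  refine IsClosed.inter (hC.preimage hc1) (IsClosed.inter (hD.preimage hc2) ?_)
  exact isClosed_le (by fun_prop) (by fun_prop)

lemma mem_certSet {C D : Set E} {x y : E} :
    (x, y) ∈ certSet C D ↔
      ∃ s ∈ hitSet x y C, ∃ t ∈ hitSet x y D, s ≤ t := by
  constructor
  · rintro ⟨⟨⟨x', y'⟩, ⟨s, t⟩⟩, ⟨hs, ht, hst⟩, h⟩
    cases h
    exact ⟨s, ⟨s.2, hs⟩, t, ⟨t.2, ht⟩, hst⟩
  · rintro ⟨s, hs, t, ht, hst⟩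
    exact ⟨⟨(x, y), ⟨⟨s, hs.1⟩, ⟨t, ht.1⟩⟩⟩, ⟨hs.2, ht.2, hst⟩, rfl⟩

end Aux

theorem stmt17 {d : ℕ} (c₁ c₂ Ξ γ : Set (EuclideanSpace ℝ (Fin d))) (r : ℝ) (hr : 0 ≤ r)
    (h1 : IsCompact c₁) (h2 : IsCompact c₂)
    (hC1 : Convex ℝ (c₁ + Metric.closedBall (0 : EuclideanSpace ℝ (Fin d)) r))
    (hC2 : Convex ℝ (c₂ + Metric.closedBall (0 : EuclideanSpace ℝ (Fin d)) r))
    (hdisj : Disjoint (c₁ + Metric.closedBall (0 : EuclideanSpace ℝ (Fin d)) r)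
      (c₂ + Metric.closedBall (0 : EuclideanSpace ℝ (Fin d)) r))
    (hΞ : Convex ℝ Ξ) (hγ : Convex ℝ γ)
    (hhit : ∀ x ∈ Ξ, ∀ y ∈ γ,
      (segment ℝ x y ∩ (c₁ + Metric.closedBall (0 : EuclideanSpace ℝ (Fin d)) r)).Nonempty ∧
      (segment ℝ x y ∩ (c₂ + Metric.closedBall (0 : EuclideanSpace ℝ (Fin d)) r)).Nonempty) :
    (∀ x ∈ Ξ, ∀ y ∈ γ,
        firstHit x y (c₁ + Metric.closedBall (0 : EuclideanSpace ℝ (Fin d)) r) <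
          firstHit x y (c₂ + Metric.closedBall (0 : EuclideanSpace ℝ (Fin d)) r)) ∨
    (∀ x ∈ Ξ, ∀ y ∈ γ,
        firstHit x y (c₂ + Metric.closedBall (0 : EuclideanSpace ℝ (Fin d)) r) <
          firstHit x y (c₁ + Metric.closedBall (0 : EuclideanSpace ℝ (Fin d)) r)) := by
  set C₁ := c₁ + Metric.closedBall (0 : EuclideanSpace ℝ (Fin d)) r with hC₁def
  set C₂ := c₂ + Metric.closedBall (0 : EuclideanSpace ℝ (Fin d)) r with hC₂def
  have hcl1 : IsClosed C₁ := (h1.add (isCompact_closedBall _ _)).isClosed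
  have hcl2 : IsClosed C₂ := (h2.add (isCompact_closedBall _ _)).isClosed
  rcases Set.eq_empty_or_nonempty Ξ with hΞe | ⟨x₀, hx₀⟩
  · left; intro x hx; exact absurd hx (by simp [hΞe])
  rcases Set.eq_empty_or_nonempty γ with hγe | ⟨y₀, hy₀⟩
  · left; intro x hx y hy; exact absurd hy (by simp [hγe])
  -- nonemptiness of hit sets everywhere
  have hne1 : ∀ x ∈ Ξ, ∀ y ∈ γ, (hitSet x y C₁).Nonempty :=
    fun x hx y hy => hitSet_nonempty (hhit x hx y hy).1
  have hne2 : ∀ x ∈ Ξ, ∀ y ∈ γ, (hitSet x y C₂).Nonempty :=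
    fun x hx y hy => hitSet_nonempty (hhit x hx y hy).2
  -- transfer lemma: the order at one point propagates to all points
  have transfer : ∀ (C D : Set (EuclideanSpace ℝ (Fin d))), IsClosed C → IsClosed D →
      Convex ℝ C → Convex ℝ D → Disjoint C D →
      (∀ x ∈ Ξ, ∀ y ∈ γ, (hitSet x y C).Nonempty) →
      (∀ x ∈ Ξ, ∀ y ∈ γ, (hitSet x y D).Nonempty) →
      ∀ x₁ ∈ Ξ, ∀ y₁ ∈ γ, firstHit x₁ y₁ C < firstHit x₁ y₁ D →
      ∀ x ∈ Ξ, ∀ y ∈ γ, firstHit x y C < firstHit x y D := by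
    intro C D hCc hDc hCv hDv hdj hneC hneD x₁ hx₁ y₁ hy₁ hlt x hx y hy
    by_contra hcon
    push_neg at hcon
    -- then at (x,y) the order is reversed (strictly)
    have hlt' : firstHit x y D < firstHit x y C := by
      rcases hcon.lt_or_eq with h | h
      · exact h
      · exfalso
        have ha := firstHit_mem hDc (hneD x hx y hy)
        have hb := firstHit_mem hCc (hneC x hx y hy)
        rw [h] at ha
        exact (hdj.ne_of_mem hb.2 ha.2) rfl
    -- connectedness argument on Ξ ×ˢ γ
    have hpre : IsPreconnected (Ξ ×ˢ γ) := (hΞ.prod hγ).isPreconnected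
    have hsub : Ξ ×ˢ γ ⊆ (certSet D C)ᶜ ∪ (certSet C D)ᶜ := by
      rintro ⟨a, b⟩ ⟨ha, hb⟩
      by_contra hmem
      simp only [Set.mem_union, Set.mem_compl_iff, not_or, not_not] at hmem
      obtain ⟨hm1, hm2⟩ := hmem
      rw [mem_certSet] at hm1 hm2
      obtain ⟨s, hs, t, ht, hst⟩ := hm1
      obtain ⟨s', hs', t', ht', hst'⟩ := hm2
      have o1 := firstHit_lt hDc hCc hCv hdj.symm (hneD a ha b hb) (hneC a ha b hb) hs ht hst
      have o2 := firstHit_lt hCc hDc hDv hdj (hneC a ha b hb) (hneD a ha b hb) hs' ht' hst'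
      exact absurd (o1.trans o2) (lt_irrefl _)
    have hu1 : ((Ξ ×ˢ γ) ∩ (certSet D C)ᶜ).Nonempty := by
      refine ⟨(x₁, y₁), ⟨hx₁, hy₁⟩, ?_⟩
      intro hmem
      rw [mem_certSet] at hmem
      obtain ⟨s, hs, t, ht, hst⟩ := hmem
      have := firstHit_lt hDc hCc hCv hdj.symm (hneD x₁ hx₁ y₁ hy₁) (hneC x₁ hx₁ y₁ hy₁) hs ht hst
      exact absurd (this.trans hlt) (lt_irrefl _)
    have hu2 : ((Ξ ×ˢ γ) ∩ (certSet C D)ᶜ).Nonempty := by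
      refine ⟨(x, y), ⟨hx, hy⟩, ?_⟩
      intro hmem
      rw [mem_certSet] at hmem
      obtain ⟨s, hs, t, ht, hst⟩ := hmem
      have := firstHit_lt hCc hDc hDv hdj (hneC x hx y hy) (hneD x hx y hy) hs ht hst
      exact absurd (this.trans hlt') (lt_irrefl _)
    obtain ⟨⟨a, b⟩, ⟨ha, hb⟩, hna, hnb⟩ :=
      hpre _ _ (certSet_isClosed hDc hCc).isOpen_compl (certSet_isClosed hCc hDc).isOpen_compl
        hsub hu1 hu2
    -- but (a,b) must be in one of the two cert sets
    have hCm := firstHit_mem hCc (hneC a ha b hb)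
    have hDm := firstHit_mem hDc (hneD a ha b hb)
    rcases le_total (firstHit a b C) (firstHit a b D) with h | h
    · exact hnb (mem_certSet.mpr ⟨_, hCm, _, hDm, h⟩)
    · exact hna (mem_certSet.mpr ⟨_, hDm, _, hCm, h⟩)
  -- decide the base order at (x₀, y₀)
  have hne : firstHit x₀ y₀ C₁ ≠ firstHit x₀ y₀ C₂ := by
    intro h
    have ha := firstHit_mem hcl1 (hne1 x₀ hx₀ y₀ hy₀)
    have hb := firstHit_mem hcl2 (hne2 x₀ hx₀ y₀ hy₀)
    rw [h] at ha
    exact (hdisj.ne_of_mem ha.2 hb.2) rfl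
  rcases hne.lt_or_gt with h | h
  · left
    exact transfer C₁ C₂ hcl1 hcl2 hC1 hC2 hdisj hne1 hne2 x₀ hx₀ y₀ hy₀ h
  · right
    exact transfer C₂ C₁ hcl2 hcl1 hC2 hC1 hdisj.symm hne2 hne1 x₀ hx₀ y₀ hy₀ h
end
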